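/- arXiv:1511.06751 — 2 statements merged into one kernel-verified Lean document; each statement's English description precedes it below -/
import Mathlib

section
/- Let V ⊆ ℂⁿ, let Z = (z₁, …, z_S) be a finite list of points of V, and let v₁, …, v_D ∈ ℝ[x₁,…,xₙ] be polynomials that are linearly independent as functions on V, i.e., the only μ ∈ ℝ^D with Σᵢ μᵢ vᵢ vanishing identically on V is μ = 0. Let L be the real span of v₁, …, v_D, let U ∈ ℂ^{D×S} be the matrix with entries U_{i,s} = vᵢ(z_s), and let Û = [U | Ū] ∈ ℂ^{D×2S} be the block matrix whose last S columns are the entrywise complex conjugates of the columns of U. Then (L, Z) is poised if and only if the rank of Û over ℂ equals D. -/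
open MvPolynomial Matrix

lemma aux_rank_eq_iff {D : ℕ} {m : Type*} [Fintype m] (M : Matrix (Fin D) m ℂ) :
    M.rank = D ↔ ∀ μ : Fin D → ℂ, Matrix.vecMul μ M = 0 → μ = 0 := by
  rw [← Matrix.rank_transpose, Matrix.rank]
  have hrn := LinearMap.finrank_range_add_finrank_ker (Mᵀ.mulVecLin)
  have hfd : Module.finrank ℂ (Fin D → ℂ) = D := by simp
  rw [hfd] at hrn
  have hker : (∀ μ : Fin D → ℂ, Matrix.vecMul μ M = 0 → μ = 0) ↔
      LinearMap.ker (Mᵀ.mulVecLin) = ⊥ := by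
    rw [LinearMap.ker_eq_bot']
    constructor
    · intro h μ hμ
      exact h μ (by simpa [Matrix.mulVecLin_apply, Matrix.mulVec_transpose] using hμ)
    · intro h μ hμ
      exact h μ (by simpa [Matrix.mulVecLin_apply, Matrix.mulVec_transpose] using hμ)
  rw [hker]
  constructor
  · intro h
    rw [h, add_comm] at hrn
    have : Module.finrank ℂ (LinearMap.ker (Mᵀ.mulVecLin)) = 0 := by omega
    exact Submodule.finrank_eq_zero.mp this
  · intro h
    rw [h] at hrn
    simpa using hrn

/-- poisedness is equivalent to the empirical dimension being `D`. -/
theorem stmt_4 {n D S : ℕ} (V : Set (Fin n → ℂ))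
    (z : Fin S → (Fin n → ℂ)) (hzV : ∀ s, z s ∈ V)
    (v : Fin D → MvPolynomial (Fin n) ℝ)
    (hli : ∀ μ : Fin D → ℝ,
      (∀ x ∈ V, aeval x (∑ i, μ i • v i) = 0) → μ = 0)
    (U : Matrix (Fin D) (Fin S) ℂ) (hU : ∀ i s, U i s = aeval (z s) (v i)) :
    (∀ q ∈ Submodule.span ℝ (Set.range v),
        (∀ s, aeval (z s) q = 0) → ∀ x ∈ V, aeval x q = 0) ↔
      (Matrix.fromCols U (U.map (starRingEnd ℂ))).rank = D := by
  rw [aux_rank_eq_iff]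
  have heval : ∀ (μ : Fin D → ℝ) (x : Fin n → ℂ),
      aeval x (∑ i, μ i • v i) = ∑ i, (μ i : ℂ) * aeval x (v i) := by
    intro μ x
    rw [map_sum]
    congr 1; ext i
    rw [_root_.map_smul, Complex.real_smul]
  constructor
  · -- poised → injective
    intro hp μ hμ
    rw [Matrix.vecMul_fromCols] at hμ
    have h1 : ∀ s, ∑ i, μ i * U i s = 0 := by
      intro s
      have := congrFun hμ (Sum.inl s)
      simpa [Matrix.vecMul, dotProduct] using this
    have h2 : ∀ s, ∑ i, (starRingEnd ℂ) (μ i) * U i s = 0 := by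
      intro s
      have := congrFun hμ (Sum.inr s)
      simp only [Sum.elim_inr, Matrix.vecMul, dotProduct, Matrix.map_apply,
        Pi.zero_apply] at this
      have := congrArg (starRingEnd ℂ) this
      simpa [map_sum] using this
    -- real and imaginary parts
    have key : ∀ μr : Fin D → ℝ, (∀ s, ∑ i, (μr i : ℂ) * U i s = 0) → μr = 0 := by
      intro μr hμr
      apply hli
      intro x hx
      have hq : ∀ s, aeval (z s) (∑ i, μr i • v i) = 0 := by
        intro s
        rw [heval]
        simpa [hU] using hμr s
      exact hp (∑ i, μr i • v i)
        (Submodule.sum_mem _ fun i _ => Submodule.smul_mem _ _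
          (Submodule.subset_span ⟨i, rfl⟩)) hq x hx
    have ha : (fun i => (μ i).re) = 0 := by
      apply key
      intro s
      have := congrArg₂ (· + ·) (h1 s) (h2 s)
      simp only [add_zero] at this
      rw [← Finset.sum_add_distrib] at this
      have h2' : ∑ i, ((μ i + (starRingEnd ℂ) (μ i)) * U i s) = 0 := by
        rw [← this]; congr 1; ext i; ring
      have : (2 : ℂ) * ∑ i, ((μ i).re : ℂ) * U i s = 0 := by
        rw [Finset.mul_sum, ← h2']
        congr 1; ext i
        rw [Complex.add_conj]
        push_cast
        ring
      have h2ne : (2 : ℂ) ≠ 0 := two_ne_zero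
      exact (mul_eq_zero.mp this).resolve_left h2ne
    have hb : (fun i => (μ i).im) = 0 := by
      apply key
      intro s
      have := congrArg₂ (· - ·) (h1 s) (h2 s)
      simp only [sub_zero] at this
      rw [← Finset.sum_sub_distrib] at this
      have h2' : ∑ i, ((μ i - (starRingEnd ℂ) (μ i)) * U i s) = 0 := by
        rw [← this]; congr 1; ext i; ring
      have : (2 * Complex.I) * ∑ i, ((μ i).im : ℂ) * U i s = 0 := by
        rw [Finset.mul_sum, ← h2']
        congr 1; ext i
        rw [Complex.sub_conj]
        push_cast
        ring
      have h2ne : (2 * Complex.I : ℂ) ≠ 0 := by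
        simp [Complex.I_ne_zero]
      exact (mul_eq_zero.mp this).resolve_left h2ne
    funext i
    have hai := congrFun ha i
    have hbi := congrFun hb i
    simp only [Pi.zero_apply] at hai hbi ⊢
    exact Complex.ext hai hbi
  · -- injective → poised
    intro hinj q hq hqz x hx
    obtain ⟨μ, hμ⟩ := (Finsupp.mem_span_range_iff_exists_finsupp).mp hq
    set μ' : Fin D → ℝ := fun i => μ i with hμ'
    have hqsum : q = ∑ i, μ' i • v i := by
      rw [← hμ]
      exact Finsupp.sum_fintype _ _ (fun i => zero_smul ℝ (v i))
    have h0 : ∀ s, ∑ i, (μ' i : ℂ) * U i s = 0 := by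
      intro s
      have := hqz s
      rw [hqsum, heval] at this
      simpa [hU] using this
    have hvm : Matrix.vecMul (fun i => (μ' i : ℂ)) (Matrix.fromCols U (U.map (starRingEnd ℂ))) = 0 := by
      rw [Matrix.vecMul_fromCols]
      funext s
      cases s with
      | inl s => simpa [Matrix.vecMul, dotProduct] using h0 s
      | inr s =>
        have := congrArg (starRingEnd ℂ) (h0 s)
        simp only [map_sum, _root_.map_mul, Complex.conj_ofReal, map_zero] at this
        simpa [Matrix.vecMul, dotProduct] using this
    have := hinj _ hvm
    have hμ0 : μ' = 0 := by
      funext i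
      have := congrFun this i
      simp only [Pi.zero_apply] at this ⊢
      exact_mod_cast this
    rw [hqsum, hμ0]
    simp
end

section
/- Let W ⊆ ℂⁿ be an irreducible variety, let V = W ∪ W̄, and let v₁, …, v_D ∈ ℝ[x₁,…,xₙ] be linearly independent as functions on V (the only μ ∈ ℝ^D with Σᵢ μᵢ vᵢ vanishing identically on V is μ = 0). Let S be an integer with 2S ≤ D. Then there exists a polynomial Q in 2·S·n complex variables such that: (i) there exist z₁, …, z_S ∈ W with Q(z₁, …, z_S, z̄₁, …, z̄_S) ≠ 0; and (ii) for every z₁, …, z_S ∈ W with Q(z₁, …, z_S, z̄₁, …, z̄_S) ≠ 0, the D×2S matrix Û whose first S columns are (vᵢ(z_s))ᵢ and whose last S columns are (vᵢ(z̄_s))ᵢ has rank 2S over ℂ. -/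
open MvPolynomial

/-- Coordinatewise complex conjugation of a point of `ℂⁿ`. -/
noncomputable def conjPt {n : ℕ} (z : Fin n → ℂ) : Fin n → ℂ :=
  fun i => (starRingEnd ℂ) (z i)

/-- Evaluation of a polynomial `Q` in the `2·S·n` variables
`z₁,…,z_S, z̄₁,…,z̄_S` at a tuple of samples `z`. -/
noncomputable def evalSamples {n S : ℕ}
    (Q : MvPolynomial ((Fin S ⊕ Fin S) × Fin n) ℂ)
    (z : Fin S → Fin n → ℂ) : ℂ :=
  MvPolynomial.eval
    (fun p => Sum.elim (fun s => z s p.2) (fun s => conjPt (z s) p.2) p.1) Q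

open scoped ComplexOrder

lemma aeval_conjPt {n : ℕ} (z : Fin n → ℂ) (p : MvPolynomial (Fin n) ℝ) :
    (aeval (conjPt z) p : ℂ) = starRingEnd ℂ (aeval z p) := by
  have h : ((Complex.conjAe.toAlgHom : ℂ →ₐ[ℝ] ℂ).comp (aeval (R := ℝ) z))
      = aeval (fun i => Complex.conjAe.toAlgHom (z i)) :=
    MvPolynomial.comp_aeval z Complex.conjAe.toAlgHom
  have h2 : Complex.conjAe.toAlgHom ((aeval (R := ℝ) z) p)
      = aeval (fun i => Complex.conjAe.toAlgHom (z i)) p := by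
    rw [← h]; rfl
  show (aeval (fun i => starRingEnd ℂ (z i)) p : ℂ) = _
  simpa [conjPt, Complex.conjAe_coe] using h2.symm

lemma aeval_sum_smul {n D : ℕ} (z : Fin n → ℂ) (v : Fin D → MvPolynomial (Fin n) ℝ)
    (μ : Fin D → ℝ) :
    (aeval z (∑ i, μ i • v i) : ℂ) = ∑ i, (μ i : ℂ) * aeval z (v i) := by
  rw [map_sum]
  refine Finset.sum_congr rfl fun i _ => ?_
  rw [map_smul, Complex.real_smul]

lemma eq_const_of_algebraic {L : Type} [Field L] [Algebra ℂ L] (x : L)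
    (p : Polynomial ℂ) (hp : p ≠ 0) (h0 : Polynomial.aeval x p = 0) :
    ∃ c : ℂ, x = algebraMap ℂ L c := by
  have halg : IsAlgebraic ℂ x := ⟨p, hp, h0⟩
  have hint : IsIntegral ℂ x := halg.isIntegral
  have hirr := minpoly.irreducible hint
  have hdeg : (minpoly ℂ x).degree = 1 := IsAlgClosed.degree_eq_one_of_irreducible ℂ hirr
  obtain ⟨c, hc⟩ := minpoly.degree_eq_one_iff.mp hdeg
  exact ⟨c, hc.symm⟩

lemma linearIndependent_inv_sub {L : Type} [Field L] [Algebra ℂ L] (h : L)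
    (htr : ∀ p : Polynomial ℂ, Polynomial.aeval h p = 0 → p = 0)
    {ι : Type} (c : ι → ℂ) (hc : Function.Injective c) :
    LinearIndependent ℂ (fun i => (h - algebraMap ℂ L (c i))⁻¹) := by
  classical
  have hne : ∀ i, h - algebraMap ℂ L (c i) ≠ 0 := by
    intro i hzero
    have h1 : Polynomial.aeval h (Polynomial.X - Polynomial.C (c i)) = 0 := by
      simp [sub_eq_zero.mp hzero]
    exact (Polynomial.X_sub_C_ne_zero (c i)) (htr _ h1)
  rw [linearIndependent_iff']
  intro s g hsum i hi
  set q : Polynomial ℂ := ∑ j ∈ s, Polynomial.C (g j) * ∏ k ∈ s.erase j, (Polynomial.X - Polynomial.C (c k)) with hq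
  have haq : Polynomial.aeval h q = 0 := by
    have expand : Polynomial.aeval h q =
        ∑ j ∈ s, g j • ∏ k ∈ s.erase j, (h - algebraMap ℂ L (c k)) := by
      rw [hq, map_sum]
      refine Finset.sum_congr rfl fun j _ => ?_
      rw [map_mul, map_prod, Polynomial.aeval_C, Algebra.smul_def]
      simp
    have key : ∀ j ∈ s, g j • ∏ k ∈ s.erase j, (h - algebraMap ℂ L (c k)) =
        (∏ k ∈ s, (h - algebraMap ℂ L (c k))) * (g j • (h - algebraMap ℂ L (c j))⁻¹) := by
      intro j hj
      rw [← Finset.prod_erase_mul _ _ hj, Algebra.smul_def, Algebra.smul_def,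
        mul_assoc, mul_comm (h - algebraMap ℂ L (c j)), mul_assoc,
        inv_mul_cancel₀ (hne j), mul_one, mul_comm]
    rw [expand, Finset.sum_congr rfl key, ← Finset.mul_sum, hsum, mul_zero]
  have hq0 : q = 0 := htr q haq
  have heval := congrArg (Polynomial.eval (c i)) hq0
  rw [hq, Polynomial.eval_finset_sum] at heval
  simp only [Polynomial.eval_mul, Polynomial.eval_C, Polynomial.eval_prod, Polynomial.eval_sub,
    Polynomial.eval_X, Polynomial.eval_zero] at heval
  rw [Finset.sum_eq_single i] at heval
  · have hprod : (∏ k ∈ s.erase i, (c i - c k)) ≠ 0 := by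
      refine Finset.prod_ne_zero_iff.mpr fun k hk => ?_
      have hki : k ≠ i := (Finset.mem_erase.mp hk).1
      exact sub_ne_zero.mpr fun hh => hki (hc hh.symm)
    exact (mul_eq_zero.mp heval).resolve_right hprod
  · intro j hj hji
    have hz : (∏ k ∈ s.erase j, (c i - c k)) = 0 := by
      refine Finset.prod_eq_zero (Finset.mem_erase.mpr ⟨fun hh => hji hh.symm, hi⟩) ?_
      simp
    rw [hz, mul_zero]
  · intro his; exact absurd hi his

/-- Core algebraic lemma: if for all non-real `c` the ideal generated by `I`,
`X none * F - 1` and `G - c F` (in one more variable) is the unit ideal, then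
`G` is congruent to a constant multiple of `F` modulo the prime ideal `I`. -/
lemma core_const {n : ℕ} (I : Ideal (MvPolynomial (Fin n) ℂ))
    (L : Type) [Field L] [Algebra ℂ L] (χ : MvPolynomial (Fin n) ℂ →+* L)
    (hχker : ∀ p, χ p = 0 ↔ p ∈ I)
    (halg : ∀ c : ℂ, algebraMap ℂ L c = χ (C c))
    (F G : MvPolynomial (Fin n) ℂ) (hF : F ∉ I)
    (htop : ∀ c : ℂ, c.im ≠ 0 →
      (1 : MvPolynomial (Option (Fin n)) ℂ) ∈ Ideal.span
        ((rename Option.some '' (I : Set (MvPolynomial (Fin n) ℂ))) ∪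
          {X none * rename Option.some F - 1,
           rename Option.some G - C c * rename Option.some F})) :
    ∃ c : ℂ, G - C c * F ∈ I := by
  classical
  have hFne : χ F ≠ 0 := fun h0 => hF ((hχker F).mp h0)
  set h : L := χ G * (χ F)⁻¹ with hhdef
  by_cases htra : ∃ p : Polynomial ℂ, p ≠ 0 ∧ Polynomial.aeval h p = 0
  · obtain ⟨p, hp0, hpa⟩ := htra
    obtain ⟨c, hc⟩ := eq_const_of_algebraic h p hp0 hpa
    refine ⟨c, (hχker _).mp ?_⟩
    have hχG : χ G = algebraMap ℂ L c * χ F := by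
      rw [← hc, hhdef, mul_assoc, inv_mul_cancel₀ hFne, mul_one]
    rw [map_sub, map_mul, hχG, ← halg]
    ring
  · -- transcendental case: derive a contradiction
    exfalso
    push_neg at htra
    have htr : ∀ p : Polynomial ℂ, Polynomial.aeval h p = 0 → p = 0 := by
      intro p hp
      by_contra hne
      exact htra p hne hp
    -- the evaluation map Ψ
    set gens : Option (Fin n) → L := fun o => (Option.elim o ((χ F)⁻¹) (fun i => χ (X i))) with hgens
    set Ψ : MvPolynomial (Option (Fin n)) ℂ →ₐ[ℂ] L := aeval gens with hΨdef
    have hΨrename : ∀ q : MvPolynomial (Fin n) ℂ, Ψ (rename Option.some q) = χ q := by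
      intro q
      rw [hΨdef, aeval_rename]
      have : (aeval (gens ∘ Option.some) : MvPolynomial (Fin n) ℂ →ₐ[ℂ] L).toRingHom = χ := by
        apply MvPolynomial.ringHom_ext
        · intro r
          simp only [AlgHom.toRingHom_eq_coe, RingHom.coe_coe, aeval_C]
          rw [halg]
        · intro i
          simp [hgens]
      exact RingHom.congr_fun this q
    -- for each non-real c the element (h - c)⁻¹ lies in the range of Ψ
    have hmem : ∀ c : ℂ, c.im ≠ 0 → ∃ t, Ψ t = (h - algebraMap ℂ L c)⁻¹ := by
      intro c hc
      have h1 := htop c hc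
      -- every element of the span maps to a multiple of (χ G - c χ F) by an element of range Ψ
      have hspan : ∀ p ∈ Ideal.span
          ((rename Option.some '' (I : Set (MvPolynomial (Fin n) ℂ))) ∪
            {X none * rename Option.some F - 1,
             rename Option.some G - C c * rename Option.some F}),
          ∃ t, Ψ p = Ψ t * (χ G - algebraMap ℂ L c * χ F) := by
        intro p hp
        induction hp using Submodule.span_induction with
        | mem x hx =>
          rcases hx with hx | hx
          · obtain ⟨q, hqI, rfl⟩ := hx
            refine ⟨0, ?_⟩
            rw [hΨrename, (hχker q).mpr hqI]
            simp
          · rcases hx with hx | hx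
            · refine ⟨0, ?_⟩
              rw [hx]
              rw [map_sub, map_mul, hΨrename]
              have : Ψ (X none) = (χ F)⁻¹ := by simp [hΨdef, hgens]
              rw [this, inv_mul_cancel₀ hFne]
              simp
            · refine ⟨1, ?_⟩
              simp only [Set.mem_singleton_iff] at hx
              rw [hx, map_sub, map_mul, hΨrename, hΨrename]
              have : Ψ (C c) = algebraMap ℂ L c := by simp [hΨdef]
              rw [this, map_one, one_mul]
        | zero => exact ⟨0, by simp⟩
        | add x y hx1 hy1 ihx ihy =>
          obtain ⟨t1, ht1⟩ := ihx
          obtain ⟨t2, ht2⟩ := ihy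
          exact ⟨t1 + t2, by rw [map_add, ht1, ht2, map_add]; ring⟩
        | smul a x hx1 ihx =>
          obtain ⟨t, ht⟩ := ihx
          exact ⟨a * t, by rw [smul_eq_mul, map_mul, ht, map_mul]; ring⟩
      obtain ⟨t, ht⟩ := hspan 1 h1
      rw [map_one] at ht
      -- so (χ G - c χ F) is invertible with inverse Ψ t; hence (h - c)⁻¹ = Ψ (F' * t)
      refine ⟨rename Option.some F * t, ?_⟩
      rw [map_mul, hΨrename]
      have hsub : h - algebraMap ℂ L c = (χ G - algebraMap ℂ L c * χ F) * (χ F)⁻¹ := by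
        rw [hhdef]
        field_simp
      refine eq_inv_of_mul_eq_one_left ?_
      rw [hsub]
      calc χ F * Ψ t * ((χ G - algebraMap ℂ L c * χ F) * (χ F)⁻¹)
          = (Ψ t * (χ G - algebraMap ℂ L c * χ F)) * (χ F * (χ F)⁻¹) := by ring
        _ = 1 := by rw [← ht, mul_inv_cancel₀ hFne, one_mul]
    -- linear independence of uncountably many elements in a countably-spanned module
    have hinj : Function.Injective (fun r : ℝ => (r : ℂ) + Complex.I) := by
      intro a b hab
      simpa using congrArg Complex.re hab
    have hli := linearIndependent_inv_sub h htr (fun r : ℝ => (r : ℂ) + Complex.I) hinj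
    set T : Submodule ℂ L := LinearMap.range Ψ.toLinearMap with hTdef
    have hmemT : ∀ r : ℝ, (h - algebraMap ℂ L ((r : ℂ) + Complex.I))⁻¹ ∈ T := by
      intro r
      have him : ((r : ℂ) + Complex.I).im ≠ 0 := by simp
      obtain ⟨t, ht⟩ := hmem _ him
      exact ⟨t, ht⟩
    set vv : ℝ → T := fun r => ⟨_, hmemT r⟩ with hvv
    have hlivv : LinearIndependent ℂ vv := by
      apply LinearIndependent.of_comp T.subtype
      convert hli
      rfl
    have hcard := hlivv.cardinal_lift_le_rank
    have hrankT : Module.rank ℂ T ≤ Cardinal.aleph0 := by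
      have h1 : Module.rank ℂ T ≤ Module.rank ℂ (MvPolynomial (Option (Fin n)) ℂ) :=
        LinearMap.rank_le_domain Ψ.toLinearMap
      have h2 : Module.rank ℂ (MvPolynomial (Option (Fin n)) ℂ) =
          Cardinal.mk ((Option (Fin n)) →₀ ℕ) :=
        (Module.Basis.mk_eq_rank'' (MvPolynomial.basisMonomials (Option (Fin n)) ℂ)).symm
      rw [h2] at h1
      exact h1.trans (Cardinal.mk_le_aleph0)
    rw [Cardinal.lift_id, Cardinal.lift_id] at hcard
    have : Cardinal.mk ℝ ≤ Cardinal.aleph0 := hcard.trans hrankT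
    rw [Cardinal.mk_real] at this
    exact absurd this (not_le.mpr Cardinal.aleph0_lt_continuum)

set_option maxHeartbeats 1000000 in
set_option synthInstance.maxHeartbeats 400000 in
lemma ratio_const {n : ℕ} (W : Set (Fin n → ℂ)) (hWne : W.Nonempty)
    (hWcl : W = {x | ∀ f : MvPolynomial (Fin n) ℂ, (∀ w ∈ W, eval w f = 0) → eval x f = 0})
    (hWprime : ∀ f g : MvPolynomial (Fin n) ℂ, (∀ w ∈ W, eval w (f * g) = 0) →
        (∀ w ∈ W, eval w f = 0) ∨ (∀ w ∈ W, eval w g = 0))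
    (f g : MvPolynomial (Fin n) ℝ)
    (hf : ∃ z ∈ W, (aeval z f : ℂ) ≠ 0)
    (hrel : ∀ z ∈ W, (aeval (conjPt z) f : ℂ) * aeval z g = aeval z f * aeval (conjPt z) g) :
    ∃ c : ℝ, ∀ z ∈ W, (aeval z g : ℂ) = c * aeval z f := by
  classical
  have hev : ∀ (z : Fin n → ℂ) (p : MvPolynomial (Fin n) ℝ),
      eval z (map (algebraMap ℝ ℂ) p) = aeval z p := by
    intro z p
    rw [MvPolynomial.aeval_def, eval₂_eq_eval_map]
  have hImem : ∀ p : MvPolynomial (Fin n) ℂ,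
      p ∈ vanishingIdeal ℂ W ↔ ∀ z ∈ W, eval z p = 0 := fun p => mem_vanishingIdeal_iff
  haveI hIprime : (vanishingIdeal ℂ W).IsPrime := by
    constructor
    · intro htop'
      obtain ⟨w, hw⟩ := hWne
      have h1 : (1 : MvPolynomial (Fin n) ℂ) ∈ vanishingIdeal ℂ W := htop' ▸ Submodule.mem_top
      have := (hImem 1).mp h1 w hw
      simp at this
    · intro p q hpq
      exact (hWprime p q ((hImem (p*q)).mp hpq)).imp (hImem p).mpr (hImem q).mpr
  haveI : IsDomain (MvPolynomial (Fin n) ℂ ⧸ vanishingIdeal ℂ W) :=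
    Ideal.Quotient.isDomain (vanishingIdeal ℂ W)
  obtain ⟨z₀, hz₀, hfz₀⟩ := hf
  have hFI : map (algebraMap ℝ ℂ) f ∉ vanishingIdeal ℂ W := by
    rw [hImem]
    push_neg
    exact ⟨z₀, hz₀, by rw [hev]; exact hfz₀⟩
  -- realness of attained ratio values
  have hratio_real : ∀ z ∈ W, ∀ c : ℂ,
      eval z (map (algebraMap ℝ ℂ) f) ≠ 0 →
      eval z (map (algebraMap ℝ ℂ) g) = c * eval z (map (algebraMap ℝ ℂ) f) → c.im = 0 := by
    intro z hz c hFz hGz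
    have hr := hrel z hz
    rw [aeval_conjPt, aeval_conjPt, ← hev, ← hev, hGz, map_mul] at hr
    rw [hev] at hFz
    have h2 : (c - starRingEnd ℂ c) * ((aeval z f : ℂ) * starRingEnd ℂ (aeval z f)) = 0 := by
      rw [← hev z f] at hFz ⊢
      linear_combination hr
    have h3 : (aeval z f : ℂ) * starRingEnd ℂ (aeval z f) ≠ 0 := by
      simp only [ne_eq, mul_eq_zero, map_eq_zero, or_self]
      exact hFz
    have h4 := (mul_eq_zero.mp h2).resolve_right h3
    have h5 : c = starRingEnd ℂ c := sub_eq_zero.mp h4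
    have h6 := congrArg Complex.im h5
    simp only [Complex.conj_im] at h6
    linarith
  -- the unit-ideal hypothesis, via the Nullstellensatz
  have htop : ∀ c : ℂ, c.im ≠ 0 →
      (1 : MvPolynomial (Option (Fin n)) ℂ) ∈ Ideal.span
        ((rename Option.some '' ((vanishingIdeal ℂ W : Ideal (MvPolynomial (Fin n) ℂ)) :
            Set (MvPolynomial (Fin n) ℂ))) ∪
          {X none * rename Option.some (map (algebraMap ℝ ℂ) f) - 1,
           rename Option.some (map (algebraMap ℝ ℂ) g)
             - C c * rename Option.some (map (algebraMap ℝ ℂ) f)}) := by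
    intro c hc
    by_contra hone
    have hne_top : Ideal.span _ ≠ ⊤ := fun htop' => hone (htop' ▸ Submodule.mem_top)
    -- the zero locus is nonempty
    rcases Set.eq_empty_or_nonempty (zeroLocus (k := ℂ) ℂ (Ideal.span
        ((rename Option.some '' ((vanishingIdeal ℂ W : Ideal (MvPolynomial (Fin n) ℂ)) :
            Set (MvPolynomial (Fin n) ℂ))) ∪
          {X none * rename Option.some (map (algebraMap ℝ ℂ) f) - 1,
           rename Option.some (map (algebraMap ℝ ℂ) g)
             - C c * rename Option.some (map (algebraMap ℝ ℂ) f)}))) with hemp | hpt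
    · have hrad := vanishingIdeal_zeroLocus_eq_radical (K := ℂ) (Ideal.span
        ((rename Option.some '' ((vanishingIdeal ℂ W : Ideal (MvPolynomial (Fin n) ℂ)) :
            Set (MvPolynomial (Fin n) ℂ))) ∪
          {X none * rename Option.some (map (algebraMap ℝ ℂ) f) - 1,
           rename Option.some (map (algebraMap ℝ ℂ) g)
             - C c * rename Option.some (map (algebraMap ℝ ℂ) f)}))
      rw [hemp, vanishingIdeal_empty] at hrad
      exact hne_top (Ideal.radical_eq_top.mp hrad.symm)
    · obtain ⟨x, hx⟩ := hpt
      rw [mem_zeroLocus_iff] at hx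
      simp only [aeval_eq_eval] at hx
      set z : Fin n → ℂ := x ∘ Option.some with hzdef
      have hzW : z ∈ W := by
        rw [hWcl]
        intro f' hf'
        have h0 := hx _ (Ideal.subset_span (Set.mem_union_left _ ⟨f', (hImem f').mpr hf', rfl⟩))
        rwa [eval_rename] at h0
      have hgen1 := hx _ (Ideal.subset_span (Set.mem_union_right _ (Set.mem_insert _ _)))
      have hgen2 := hx _ (Ideal.subset_span (Set.mem_union_right _
        (Set.mem_insert_of_mem _ rfl)))
      rw [map_sub, map_mul, eval_X, eval_rename, map_one, sub_eq_zero] at hgen1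
      rw [map_sub, map_mul, eval_C, eval_rename, eval_rename, sub_eq_zero] at hgen2
      have hFz : eval z (map (algebraMap ℝ ℂ) f) ≠ 0 := by
        intro h0
        rw [hzdef] at h0
        rw [h0, mul_zero] at hgen1
        exact one_ne_zero hgen1.symm
      exact hc (hratio_real z hzW c hFz hgen2)
  obtain ⟨c, hGF⟩ := core_const (vanishingIdeal ℂ W)
    (FractionRing (MvPolynomial (Fin n) ℂ ⧸ vanishingIdeal ℂ W))
    ((algebraMap (MvPolynomial (Fin n) ℂ ⧸ vanishingIdeal ℂ W)
        (FractionRing (MvPolynomial (Fin n) ℂ ⧸ vanishingIdeal ℂ W))).comp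
      (Ideal.Quotient.mk (vanishingIdeal ℂ W)))
    (by
      intro p
      constructor
      · intro h0
        have h1 : Ideal.Quotient.mk (vanishingIdeal ℂ W) p = 0 := by
          apply IsFractionRing.injective (MvPolynomial (Fin n) ℂ ⧸ vanishingIdeal ℂ W)
            (FractionRing (MvPolynomial (Fin n) ℂ ⧸ vanishingIdeal ℂ W))
          simpa using h0
        exact Ideal.Quotient.eq_zero_iff_mem.mp h1
      · intro hp
        simp [Ideal.Quotient.eq_zero_iff_mem.mpr hp])
    (by
      intro c
      rw [IsScalarTower.algebraMap_apply ℂ (MvPolynomial (Fin n) ℂ ⧸ vanishingIdeal ℂ W),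
        IsScalarTower.algebraMap_apply ℂ (MvPolynomial (Fin n) ℂ)
          (MvPolynomial (Fin n) ℂ ⧸ vanishingIdeal ℂ W),
        Ideal.Quotient.algebraMap_eq]
      rfl)
    (map (algebraMap ℝ ℂ) f) (map (algebraMap ℝ ℂ) g) hFI htop
  -- conclude
  have hval : ∀ z ∈ W, (aeval z g : ℂ) = c * aeval z f := by
    intro z hz
    have h0 := (hImem _).mp hGF z hz
    rw [map_sub, map_mul, eval_C, hev, hev, sub_eq_zero] at h0
    exact h0
  have hcim : c.im = 0 := by
    apply hratio_real z₀ hz₀ c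
    · rw [hev]; exact hfz₀
    · rw [hev, hev]; exact hval z₀ hz₀
  refine ⟨c.re, fun z hz => ?_⟩
  rw [hval z hz]
  congr 1
  apply Complex.ext
  · simp
  · simp [hcim]

noncomputable def aRe {n D : ℕ} (v : Fin D → MvPolynomial (Fin n) ℝ) (z : Fin n → ℂ) :
    Fin D → ℝ := fun i => (aeval z (v i) : ℂ).re

noncomputable def aIm {n D : ℕ} (v : Fin D → MvPolynomial (Fin n) ℝ) (z : Fin n → ℂ) :
    Fin D → ℝ := fun i => (aeval z (v i) : ℂ).im

lemma exists_indep_pair {n D : ℕ} (W : Set (Fin n → ℂ)) (hWne : W.Nonempty)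
    (hWcl : W = {x | ∀ f : MvPolynomial (Fin n) ℂ, (∀ w ∈ W, eval w f = 0) → eval x f = 0})
    (hWprime : ∀ f g : MvPolynomial (Fin n) ℂ, (∀ w ∈ W, eval w (f * g) = 0) →
        (∀ w ∈ W, eval w f = 0) ∨ (∀ w ∈ W, eval w g = 0))
    (V : Set (Fin n → ℂ)) (hV : V = W ∪ conjPt '' W)
    (v : Fin D → MvPolynomial (Fin n) ℝ)
    (hli : ∀ μ : Fin D → ℝ, (∀ x ∈ V, aeval x (∑ i, μ i • v i) = 0) → μ = 0)
    (U : Submodule ℝ (Fin D → ℝ)) (hU : Module.finrank ℝ U + 2 ≤ D) :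
    ∃ z ∈ W, ∀ α β : ℝ, ¬(α = 0 ∧ β = 0) →
      α • aRe v z + β • aIm v z ∉ U := by
  classical
  set m := D - Module.finrank ℝ U with hmdef
  have hDrk : Module.finrank ℝ (Fin D → ℝ) = D := Module.finrank_fin_fun ℝ
  have hm2 : 2 ≤ m := by omega
  have hqrank : Module.finrank ℝ ((Fin D → ℝ) ⧸ U) = m := by
    have := Submodule.finrank_quotient_add_finrank U
    omega
  set bb : Module.Basis (Fin m) ℝ ((Fin D → ℝ) ⧸ U) := Module.finBasisOfFinrankEq ℝ _ hqrank with hbb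
  set φ : Fin m → (Fin D → ℝ) →ₗ[ℝ] ℝ := fun j => (bb.coord j).comp U.mkQ with hφ
  have hmemU : ∀ x : Fin D → ℝ, (∀ j, φ j x = 0) ↔ x ∈ U := by
    intro x
    constructor
    · intro h
      have hrep : bb.repr (U.mkQ x) = 0 := by
        ext j
        simpa [hφ, Module.Basis.coord_apply] using h j
      have : U.mkQ x = 0 := by
        have := congrArg bb.repr.symm hrep
        simpa using this
      rwa [Submodule.mkQ_apply, Submodule.Quotient.mk_eq_zero] at this
    · intro hx j
      have : U.mkQ x = 0 := by
        rw [Submodule.mkQ_apply, Submodule.Quotient.mk_eq_zero]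
        exact hx
      simp [hφ, this]
  set w : Fin m → Fin D → ℝ := fun j i => φ j (Pi.single i 1) with hw
  have hsingle : ∀ (i : Fin D) (r : ℝ), (Pi.single i r : Fin D → ℝ)
      = r • (Pi.single i 1 : Fin D → ℝ) := by
    intro i r
    funext k
    by_cases hk : k = i
    · subst hk; simp
    · simp [Pi.single_apply, hk]
  have hphi : ∀ (j : Fin m) (x : Fin D → ℝ), φ j x = ∑ i, x i * w j i := by
    intro j x
    conv_lhs => rw [← Finset.univ_sum_single x]
    rw [map_sum]
    refine Finset.sum_congr rfl fun i _ => ?_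
    rw [hsingle i (x i), map_smul, smul_eq_mul]
  set q : Fin m → MvPolynomial (Fin n) ℝ := fun j => ∑ i, w j i • v i with hq
  have hQre : ∀ (j : Fin m) (z : Fin n → ℂ), (aeval z (q j) : ℂ).re = φ j (aRe v z) := by
    intro j z
    rw [hq, aeval_sum_smul, Complex.re_sum, hphi]
    refine Finset.sum_congr rfl fun i _ => ?_
    simp [aRe, Complex.mul_re, mul_comm]
  have hQim : ∀ (j : Fin m) (z : Fin n → ℂ), (aeval z (q j) : ℂ).im = φ j (aIm v z) := by
    intro j z
    rw [hq, aeval_sum_smul, Complex.im_sum, hphi]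
    refine Finset.sum_congr rfl fun i _ => ?_
    simp [aIm, Complex.mul_im, mul_comm]
  by_contra hbad
  push_neg at hbad
  -- every z ∈ W admits a dependency (α, β)
  have hdep : ∀ z ∈ W, ∃ α β : ℝ, ¬(α = 0 ∧ β = 0) ∧ α • aRe v z + β • aIm v z ∈ U := by
    intro z hz
    obtain ⟨α, β, hαβ, hmem⟩ := hbad z hz
    exact ⟨α, β, fun hand => hαβ hand.1 hand.2, hmem⟩
  -- hence all 2x2 minors vanish
  have hminor : ∀ z ∈ W, ∀ j k : Fin m,
      φ j (aRe v z) * φ k (aIm v z) = φ k (aRe v z) * φ j (aIm v z) := by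
    intro z hz j k
    obtain ⟨α, β, hαβ, hmem⟩ := hdep z hz
    have hrel : ∀ j' : Fin m, α * φ j' (aRe v z) + β * φ j' (aIm v z) = 0 := by
      intro j'
      have h0 := (hmemU _).mpr hmem j'
      rw [map_add, map_smul, map_smul, smul_eq_mul, smul_eq_mul] at h0
      exact h0
    have hαM : α * (φ j (aRe v z) * φ k (aIm v z) - φ k (aRe v z) * φ j (aIm v z)) = 0 := by
      linear_combination φ k (aIm v z) * hrel j - φ j (aIm v z) * hrel k
    have hβM : β * (φ j (aRe v z) * φ k (aIm v z) - φ k (aRe v z) * φ j (aIm v z)) = 0 := by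
      linear_combination (- φ k (aRe v z)) * hrel j + φ j (aRe v z) * hrel k
    rcases not_and_or.mp hαβ with hα | hβ
    · have := (mul_eq_zero.mp hαM).resolve_left hα
      linarith [this]
    · have := (mul_eq_zero.mp hβM).resolve_left hβ
      linarith [this]
  -- complex form of the minor relation
  have hcrel : ∀ j k : Fin m, ∀ z ∈ W,
      (aeval (conjPt z) (q j) : ℂ) * aeval z (q k) = aeval z (q j) * aeval (conjPt z) (q k) := by
    intro j k z hz
    rw [aeval_conjPt, aeval_conjPt]
    apply Complex.ext
    · simp only [Complex.mul_re, Complex.conj_re, Complex.conj_im]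
      ring
    · simp only [Complex.mul_im, Complex.conj_re, Complex.conj_im]
      have := hminor z hz j k
      rw [hQre, hQre, hQim, hQim]
      linarith
  -- some q j is nonzero somewhere on W
  have hj0 : ∃ (j : Fin m), ∃ z ∈ W, (aeval z (q j) : ℂ) ≠ 0 := by
    by_contra hall
    push_neg at hall
    have hmu := hli (w ⟨0, by omega⟩)
    have hz0 : ∀ x ∈ V, (aeval x (∑ i, w ⟨0, by omega⟩ i • v i) : ℂ) = 0 := by
      intro x hx
      rw [hV] at hx
      rcases hx with hx | ⟨z', hz', rfl⟩
      · exact hall _ x hx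
      · rw [show (∑ i, w ⟨0, by omega⟩ i • v i) = q ⟨0, by omega⟩ from rfl]
        rw [aeval_conjPt]
        rw [hall _ z' hz']
        simp
    have hw0 := hmu hz0
    -- contradiction: φ_{0} is not zero
    obtain ⟨y, hy⟩ := U.mkQ_surjective (bb ⟨0, by omega⟩)
    have h1 : φ ⟨0, by omega⟩ y = 1 := by
      rw [hφ]
      simp only [LinearMap.comp_apply, Module.Basis.coord_apply, hy, Module.Basis.repr_self]
      simp
    rw [hphi] at h1
    have : (∑ i, y i * w ⟨0, by omega⟩ i) = 0 := by
      refine Finset.sum_eq_zero fun i _ => ?_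
      rw [congrFun hw0 i]
      simp
    rw [this] at h1
    exact one_ne_zero h1.symm
  obtain ⟨j₀, z₁, hz₁, hQj₀⟩ := hj0
  -- ratios are real constants
  have hc : ∀ k : Fin m, ∃ c : ℝ, ∀ z ∈ W, (aeval z (q k) : ℂ) = c * aeval z (q j₀) :=
    fun k => ratio_const W hWne hWcl hWprime (q j₀) (q k) ⟨z₁, hz₁, hQj₀⟩ (hcrel j₀ k)
  choose c hcval using hc
  -- pick k₀ ≠ j₀
  have hm1 : 1 < m := hm2
  set k₀ : Fin m := if j₀ = ⟨0, by omega⟩ then ⟨1, by omega⟩ else ⟨0, by omega⟩ with hk₀def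
  have hk₀ : k₀ ≠ j₀ := by
    rw [hk₀def]
    split
    · rename_i h; rw [h]; intro hcon; exact absurd (Fin.val_eq_of_eq hcon) (by simp)
    · rename_i h; intro hcon; exact h hcon.symm
  -- the linear combination μ vanishes on V
  set μ : Fin D → ℝ := fun i => w k₀ i - c k₀ * w j₀ i with hμdef
  have hqsub : (∑ i, μ i • v i) = q k₀ - c k₀ • q j₀ := by
    rw [hq, hμdef, Finset.smul_sum, ← Finset.sum_sub_distrib]
    refine Finset.sum_congr rfl fun i _ => ?_
    rw [sub_smul, mul_smul]
  have hμ0 : μ = 0 := by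
    apply hli
    intro x hx
    rw [hqsub, map_sub, map_smul]
    rw [hV] at hx
    rcases hx with hx | ⟨z', hz', rfl⟩
    · rw [hcval k₀ x hx, Complex.real_smul]
      ring
    · rw [aeval_conjPt, aeval_conjPt, hcval k₀ z' hz', Complex.real_smul, map_mul]
      simp [Complex.conj_ofReal]
  -- contradiction with independence of the coordinates
  have hwk : ∀ i, w k₀ i = c k₀ * w j₀ i := by
    intro i
    have h0 := congrFun hμ0 i
    simp only [hμdef, Pi.zero_apply, sub_eq_zero] at h0
    exact h0
  obtain ⟨y, hy⟩ := U.mkQ_surjective (bb k₀)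
  have h1 : φ k₀ y = 1 := by
    rw [hφ]
    simp only [LinearMap.comp_apply, Module.Basis.coord_apply, hy, Module.Basis.repr_self]
    simp
  have h2 : φ j₀ y = 0 := by
    rw [hφ]
    simp only [LinearMap.comp_apply, Module.Basis.coord_apply, hy, Module.Basis.repr_self]
    exact Finsupp.single_eq_of_ne hk₀.symm
  rw [hphi] at h1 h2
  have hsum2 : (∑ i, y i * w k₀ i) = c k₀ * ∑ i, y i * w j₀ i := by
    rw [Finset.mul_sum]
    exact Finset.sum_congr rfl fun i _ => by rw [hwk i]; ring
  rw [hsum2, h2, mul_zero] at h1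
  exact one_ne_zero h1.symm

lemma exists_points {n D S : ℕ} (W : Set (Fin n → ℂ)) (hWne : W.Nonempty)
    (hWcl : W = {x | ∀ f : MvPolynomial (Fin n) ℂ, (∀ w ∈ W, eval w f = 0) → eval x f = 0})
    (hWprime : ∀ f g : MvPolynomial (Fin n) ℂ, (∀ w ∈ W, eval w (f * g) = 0) →
        (∀ w ∈ W, eval w f = 0) ∨ (∀ w ∈ W, eval w g = 0))
    (V : Set (Fin n → ℂ)) (hV : V = W ∪ conjPt '' W)
    (v : Fin D → MvPolynomial (Fin n) ℝ)
    (hli : ∀ μ : Fin D → ℝ, (∀ x ∈ V, aeval x (∑ i, μ i • v i) = 0) → μ = 0)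
    (hS : 2 * S ≤ D) :
    ∃ z : Fin S → Fin n → ℂ, (∀ t, z t ∈ W) ∧
      LinearIndependent ℝ (Sum.elim (fun t => aRe v (z t)) (fun t => aIm v (z t))) := by
  induction S with
  | zero =>
    exact ⟨fun t => t.elim0, fun t => t.elim0, linearIndependent_empty_type⟩
  | succ s ih =>
    obtain ⟨z, hzW, hind⟩ := ih (by omega)
    set U : Submodule ℝ (Fin D → ℝ) :=
      Submodule.span ℝ (Set.range (Sum.elim (fun t => aRe v (z t)) (fun t => aIm v (z t))))
      with hUdef
    have hrank : Module.finrank ℝ U = s + s := by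
      rw [hUdef, finrank_span_eq_card hind]
      simp
    have hU2 : Module.finrank ℝ U + 2 ≤ D := by omega
    obtain ⟨zs, hzsW, hzs⟩ := exists_indep_pair W hWne hWcl hWprime V hV v hli U hU2
    refine ⟨Fin.snoc z zs, ?_, ?_⟩
    · intro t
      refine Fin.lastCases ?_ ?_ t
      · simpa [Fin.snoc_last] using hzsW
      · intro t'
        simpa [Fin.snoc_castSucc] using hzW t'
    · rw [Fintype.linearIndependent_iff]
      intro g hg
      rw [Fintype.sum_sum_type] at hg
      simp only [Sum.elim_inl, Sum.elim_inr] at hg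
      rw [Fin.sum_univ_castSucc, Fin.sum_univ_castSucc] at hg
      simp only [Fin.snoc_castSucc, Fin.snoc_last] at hg
      set α := g (Sum.inl (Fin.last s)) with hα
      set β := g (Sum.inr (Fin.last s)) with hβ
      have hbig : (∑ t : Fin s, g (Sum.inl t.castSucc) • aRe v (z t)
          + ∑ t : Fin s, g (Sum.inr t.castSucc) • aIm v (z t)) ∈ U := by
        apply Submodule.add_mem
        · apply Submodule.sum_mem
          intro t _
          exact Submodule.smul_mem _ _ (Submodule.subset_span ⟨Sum.inl t, rfl⟩)
        · apply Submodule.sum_mem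
          intro t _
          exact Submodule.smul_mem _ _ (Submodule.subset_span ⟨Sum.inr t, rfl⟩)
      have hmem : α • aRe v zs + β • aIm v zs ∈ U := by
        have hsum0 : (α • aRe v zs + β • aIm v zs)
            + (∑ t : Fin s, g (Sum.inl t.castSucc) • aRe v (z t)
              + ∑ t : Fin s, g (Sum.inr t.castSucc) • aIm v (z t)) = 0 := by
          rw [← hg]; abel
        rw [eq_neg_of_add_eq_zero_left hsum0]
        exact Submodule.neg_mem _ hbig
      have hz0 : α = 0 ∧ β = 0 := by
        by_contra hcon
        exact hzs α β hcon hmem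
      rw [hz0.1, hz0.2] at hg
      simp only [zero_smul, add_zero] at hg
      have hg' : ∑ p : Fin s ⊕ Fin s,
          (Sum.elim (fun t => g (Sum.inl t.castSucc)) (fun t => g (Sum.inr t.castSucc)) p) •
            (Sum.elim (fun t => aRe v (z t)) (fun t => aIm v (z t)) p) = 0 := by
        rw [Fintype.sum_sum_type]
        simp only [Sum.elim_inl, Sum.elim_inr]
        exact hg
      have hall := (Fintype.linearIndependent_iff.mp hind) _ hg'
      intro p
      rcases p with t | t
      · refine Fin.lastCases ?_ ?_ t
        · exact hz0.1
        · intro t'; exact hall (Sum.inl t')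
      · refine Fin.lastCases ?_ ?_ t
        · exact hz0.2
        · intro t'; exact hall (Sum.inr t')

lemma complex_indep {D : ℕ} {ι : Type} [Fintype ι] (F : ι → Fin D → ℂ)
    (h : LinearIndependent ℝ
      (Sum.elim (fun t : ι => fun i => (F t i).re) (fun t : ι => fun i => (F t i).im))) :
    LinearIndependent ℂ (Sum.elim F (fun t => fun i => starRingEnd ℂ (F t i))) := by
  rw [Fintype.linearIndependent_iff]
  intro g hg
  have hcoord : ∀ i : Fin D,
      (∑ t, g (Sum.inl t) * F t i) + (∑ t, g (Sum.inr t) * starRingEnd ℂ (F t i)) = 0 := by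
    intro i
    have := congrFun hg i
    rw [Fintype.sum_sum_type] at this
    simpa [Finset.sum_apply] using this
  have hre : ∀ i : Fin D,
      (∑ t, ((g (Sum.inl t)).re + (g (Sum.inr t)).re) * (F t i).re
        + ∑ t, (-(g (Sum.inl t)).im + (g (Sum.inr t)).im) * (F t i).im) = 0 := by
    intro i
    have h0 := congrArg Complex.re (hcoord i)
    simp only [Complex.add_re, Complex.re_sum, Complex.mul_re, Complex.conj_re,
      Complex.conj_im, Complex.zero_re] at h0
    rw [← Finset.sum_add_distrib, ← h0, ← Finset.sum_add_distrib]
    refine Finset.sum_congr rfl fun t _ => ?_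
    ring
  have him : ∀ i : Fin D,
      (∑ t, ((g (Sum.inl t)).im + (g (Sum.inr t)).im) * (F t i).re
        + ∑ t, ((g (Sum.inl t)).re - (g (Sum.inr t)).re) * (F t i).im) = 0 := by
    intro i
    have h0 := congrArg Complex.im (hcoord i)
    simp only [Complex.add_im, Complex.im_sum, Complex.mul_im, Complex.conj_re,
      Complex.conj_im, Complex.zero_im] at h0
    rw [← Finset.sum_add_distrib, ← h0, ← Finset.sum_add_distrib]
    refine Finset.sum_congr rfl fun t _ => ?_
    ring
  have hliR := Fintype.linearIndependent_iff.mp h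
  have hvec1 : ∑ p : ι ⊕ ι,
      (Sum.elim (fun t => (g (Sum.inl t)).re + (g (Sum.inr t)).re)
        (fun t => -(g (Sum.inl t)).im + (g (Sum.inr t)).im) p) •
      (Sum.elim (fun t : ι => fun i => (F t i).re) (fun t : ι => fun i => (F t i).im) p) = 0 := by
    rw [Fintype.sum_sum_type]
    simp only [Sum.elim_inl, Sum.elim_inr]
    funext i
    simp only [Finset.sum_apply, Pi.add_apply, Pi.smul_apply, smul_eq_mul, Pi.zero_apply]
    exact hre i
  have h1 := hliR _ hvec1
  have hvec2 : ∑ p : ι ⊕ ι,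
      (Sum.elim (fun t => (g (Sum.inl t)).im + (g (Sum.inr t)).im)
        (fun t => (g (Sum.inl t)).re - (g (Sum.inr t)).re) p) •
      (Sum.elim (fun t : ι => fun i => (F t i).re) (fun t : ι => fun i => (F t i).im) p) = 0 := by
    rw [Fintype.sum_sum_type]
    simp only [Sum.elim_inl, Sum.elim_inr]
    funext i
    simp only [Finset.sum_apply, Pi.add_apply, Pi.smul_apply, smul_eq_mul, Pi.zero_apply]
    exact him i
  have h2 := hliR _ hvec2
  intro p
  rcases p with t | t
  · have e1 := h1 (Sum.inl t); have e2 := h1 (Sum.inr t)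
    have e3 := h2 (Sum.inl t); have e4 := h2 (Sum.inr t)
    simp only [Sum.elim_inl, Sum.elim_inr] at e1 e2 e3 e4
    apply Complex.ext
    · simp; linarith
    · simp; linarith
  · have e1 := h1 (Sum.inl t); have e2 := h1 (Sum.inr t)
    have e3 := h2 (Sum.inl t); have e4 := h2 (Sum.inr t)
    simp only [Sum.elim_inl, Sum.elim_inr] at e1 e2 e3 e4
    apply Complex.ext
    · simp; linarith
    · simp; linarith

lemma gram_det_ne_zero {D : ℕ} {ι : Type} [Fintype ι] [DecidableEq ι]
    (A : Matrix (Fin D) ι ℂ) (h : LinearIndependent ℂ (fun c => fun i => A i c)) :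
    (A.conjTranspose * A).det ≠ 0 := by
  intro hdet
  obtain ⟨x, hx0, hxv⟩ := (Matrix.exists_mulVec_eq_zero_iff).mpr hdet
  have hAx : A.mulVec x = 0 := by
    have h1 : dotProduct (star x) ((A.conjTranspose * A).mulVec x) = 0 := by
      rw [hxv, dotProduct_zero]
    rw [← Matrix.mulVec_mulVec, Matrix.dotProduct_mulVec, ← Matrix.star_mulVec] at h1
    exact (dotProduct_star_self_eq_zero).mp h1
  have hcombo : ∑ c, x c • (fun i => A i c) = 0 := by
    funext i
    have h2 := congrFun hAx i
    rw [Matrix.mulVec, dotProduct] at h2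
    simpa [Finset.sum_apply, mul_comm] using h2
  exact hx0 (funext fun c => Fintype.linearIndependent_iff.mp h _ hcombo c)

/-- when `2S ≤ D`, generic samples give an evaluation matrix of
full column rank `2S`. -/
theorem stmt_8 {n D S : ℕ} (W : Set (Fin n → ℂ))
    (hWne : W.Nonempty)
    (hWcl : W = {x | ∀ f : MvPolynomial (Fin n) ℂ,
      (∀ w ∈ W, eval w f = 0) → eval x f = 0})
    (hWprime : ∀ f g : MvPolynomial (Fin n) ℂ,
      (∀ w ∈ W, eval w (f * g) = 0) →
        (∀ w ∈ W, eval w f = 0) ∨ (∀ w ∈ W, eval w g = 0))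
    (V : Set (Fin n → ℂ)) (hV : V = W ∪ conjPt '' W)
    (v : Fin D → MvPolynomial (Fin n) ℝ)
    (hli : ∀ μ : Fin D → ℝ,
      (∀ x ∈ V, aeval x (∑ i, μ i • v i) = 0) → μ = 0)
    (hS : 2 * S ≤ D) :
    ∃ Q : MvPolynomial ((Fin S ⊕ Fin S) × Fin n) ℂ,
      (∃ z : Fin S → Fin n → ℂ, (∀ s, z s ∈ W) ∧ evalSamples Q z ≠ 0) ∧
      (∀ z : Fin S → Fin n → ℂ, (∀ s, z s ∈ W) → evalSamples Q z ≠ 0 →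
        (Matrix.fromCols
          (Matrix.of fun i s => (aeval (z s) (v i) : ℂ))
          (Matrix.of fun i s => (aeval (conjPt (z s)) (v i) : ℂ))).rank = 2 * S) := by
  classical
  set P : Fin D → (Fin S ⊕ Fin S) → MvPolynomial ((Fin S ⊕ Fin S) × Fin n) ℂ :=
    fun i c => rename (fun j => (c, j)) (map (algebraMap ℝ ℂ) (v i)) with hP
  set Q : MvPolynomial ((Fin S ⊕ Fin S) × Fin n) ℂ :=
    (Matrix.of fun c c' : Fin S ⊕ Fin S => ∑ i, P i (Sum.swap c) * P i c').det with hQ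
  set M : (Fin S → Fin n → ℂ) → Matrix (Fin D) (Fin S ⊕ Fin S) ℂ := fun z =>
    Matrix.fromCols
      (Matrix.of fun i s => (aeval (z s) (v i) : ℂ))
      (Matrix.of fun i s => (aeval (conjPt (z s)) (v i) : ℂ)) with hM
  have hev : ∀ (x : Fin n → ℂ) (p : MvPolynomial (Fin n) ℝ),
      eval x (map (algebraMap ℝ ℂ) p) = aeval x p := by
    intro x p
    rw [MvPolynomial.aeval_def, eval₂_eq_eval_map]
  have hMapp : ∀ z (i : Fin D) (c : Fin S ⊕ Fin S),
      M z i c = aeval (Sum.elim z (fun s => conjPt (z s)) c) (v i) := by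
    intro z i c
    rcases c with s | s <;> simp [hM, Matrix.fromCols]
  have hPeval : ∀ (z : Fin S → Fin n → ℂ) (i : Fin D) (c : Fin S ⊕ Fin S),
      eval (fun p : (Fin S ⊕ Fin S) × Fin n =>
          Sum.elim (fun s => z s p.2) (fun s => conjPt (z s) p.2) p.1) (P i c)
        = aeval (Sum.elim z (fun s => conjPt (z s)) c) (v i) := by
    intro z i c
    rw [hP, eval_rename]
    have : ((fun p : (Fin S ⊕ Fin S) × Fin n =>
        Sum.elim (fun s => z s p.2) (fun s => conjPt (z s) p.2) p.1) ∘ (fun j => (c, j)))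
        = Sum.elim z (fun s => conjPt (z s)) c := by
      funext j
      rcases c with s | s <;> rfl
    rw [this, hev]
  have hgram : ∀ z : Fin S → Fin n → ℂ, evalSamples Q z = ((M z).conjTranspose * (M z)).det := by
    intro z
    rw [show evalSamples Q z = eval (fun p : (Fin S ⊕ Fin S) × Fin n =>
        Sum.elim (fun s => z s p.2) (fun s => conjPt (z s) p.2) p.1) Q from rfl, hQ]
    rw [RingHom.map_det]
    congr 1
    ext c c'
    rw [Matrix.mul_apply]
    simp only [RingHom.mapMatrix_apply, Matrix.map_apply, Matrix.of_apply]
    rw [map_sum]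
    refine Finset.sum_congr rfl fun i _ => ?_
    rw [map_mul, hPeval, hPeval, Matrix.conjTranspose_apply, hMapp, hMapp]
    congr 1
    rcases c with s | s
    · show (aeval (conjPt (z s)) (v i) : ℂ) = star (aeval (z s) (v i) : ℂ)
      rw [aeval_conjPt]
      rfl
    · show (aeval (z s) (v i) : ℂ) = star (aeval (conjPt (z s)) (v i) : ℂ)
      rw [aeval_conjPt (z s) (v i)]
      exact (Complex.conj_conj _).symm
  refine ⟨Q, ?_, ?_⟩
  · obtain ⟨z, hzW, hzind⟩ := exists_points W hWne hWcl hWprime V hV v hli hS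
    refine ⟨z, hzW, ?_⟩
    rw [hgram]
    apply gram_det_ne_zero
    have hfam : (fun c => fun i => M z i c) =
        Sum.elim (fun s => fun i => (aeval (z s) (v i) : ℂ))
          (fun s => fun i => starRingEnd ℂ (aeval (z s) (v i) : ℂ)) := by
      funext c
      rcases c with s | s
      · funext i; rw [hMapp]; rfl
      · funext i; rw [hMapp]; exact aeval_conjPt _ _
    rw [hfam]
    exact complex_indep _ hzind
  · intro z hzW hQz
    rw [hgram] at hQz
    have hunit : IsUnit ((M z).conjTranspose * (M z)) :=
      (Matrix.isUnit_iff_isUnit_det _).mpr (isUnit_iff_ne_zero.mpr hQz)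
    have h1 : ((M z).conjTranspose * (M z)).rank = Fintype.card (Fin S ⊕ Fin S) :=
      Matrix.rank_of_isUnit _ hunit
    have h2 := Matrix.rank_conjTranspose_mul_self (M z)
    rw [h2] at h1
    rw [show (Matrix.fromCols
          (Matrix.of fun i s => (aeval (z s) (v i) : ℂ))
          (Matrix.of fun i s => (aeval (conjPt (z s)) (v i) : ℂ))) = M z from rfl, h1]
    simp [two_mul]
end
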